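/- arXiv:2212.14487 — 5 statements merged into one kernel-verified Lean document; each statement's English description precedes it below -/
import Mathlib

section
/- Let m > 1 be odd. Then Δ(m) = R(m) if m ∉ {3, 5, 9}, and Δ(m) = R(m) \ {1} if m ∈ {3, 5, 9}. -/
open scoped Pointwise

/-- The set of all complex `m`-th roots of unity. -/
def Rset (m : ℕ) : Set ℂ := {z : ℂ | z ^ m = 1}

/-- The set of primitive complex `m`-th roots of unity. -/
def Phi (m : ℕ) : Set ℂ := {z : ℂ | IsPrimitiveRoot z m}

/-- `Delta m` is the set of products `η₁ ⋯ η_{φ(m)/2}` where the `ηᵢ` are primitive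
`m`-th roots of unity such that `η₁^{±1}, …, η_{φ(m)/2}^{±1}` are pairwise distinct
(equivalently no two chosen elements, equal or not, multiply to `1`). -/
def Delta (m : ℕ) : Set ℂ :=
  {z : ℂ | ∃ s : Finset ℂ, ↑s ⊆ Phi m ∧ s.card = Nat.totient m / 2 ∧
    (∀ x ∈ s, ∀ y ∈ s, x * y ≠ 1) ∧ ∏ x ∈ s, x = z}

lemma subsum : ∀ (R : Finset ℕ), (∀ x ∈ R, x ≤ 1 + ∑ y ∈ R.filter (· < x), y) →
    ∀ t, t ≤ ∑ y ∈ R, y → ∃ T ⊆ R, ∑ y ∈ T, y = t := by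
  intro R
  induction R using Finset.strongInduction with
  | _ R ih =>
    intro hgap t ht
    rcases R.eq_empty_or_nonempty with rfl | hne
    · simp at ht; exact ⟨∅, Finset.Subset.refl _, by simp [ht]⟩
    · set x := R.max' hne with hx
      have hxR : x ∈ R := R.max'_mem hne
      have hss : R.erase x ⊂ R := Finset.erase_ssubset hxR
      have hfilt : ∀ y, y ∈ R → (R.erase x).filter (· < y) = R.filter (· < y) := by
        intro y hy
        ext z
        simp only [Finset.mem_filter, Finset.mem_erase]
        constructor
        · rintro ⟨⟨_, hz⟩, hzy⟩; exact ⟨hz, hzy⟩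
        · rintro ⟨hz, hzy⟩
          refine ⟨⟨?_, hz⟩, hzy⟩
          rintro rfl
          exact absurd (R.le_max' y hy) (by omega)
      have hgap' : ∀ y ∈ R.erase x, y ≤ 1 + ∑ z ∈ (R.erase x).filter (· < y), z := by
        intro y hy
        rw [hfilt y (Finset.mem_of_mem_erase hy)]
        exact hgap y (Finset.mem_of_mem_erase hy)
      have hsum : ∑ y ∈ R, y = x + ∑ y ∈ R.erase x, y := (Finset.add_sum_erase R id hxR).symm
      by_cases hc : t ≤ ∑ y ∈ R.erase x, y
      · obtain ⟨T, hT, hTs2⟩ := ih _ hss hgap' t hc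
        exact ⟨T, hT.trans (Finset.erase_subset _ _), hTs2⟩
      · push_neg at hc
        have hxt : x ≤ t := by
          have h1 := hgap x hxR
          have h2 : R.filter (· < x) ⊆ R.erase x := by
            intro z hz
            simp only [Finset.mem_filter] at hz
            exact Finset.mem_erase.mpr ⟨by omega, hz.1⟩
          have h3 : ∑ z ∈ R.filter (· < x), z ≤ ∑ z ∈ R.erase x, z := Finset.sum_le_sum_of_subset h2
          omega
        obtain ⟨T, hT, hTs⟩ := ih _ hss hgap' (t - x) (by omega)
        refine ⟨insert x T, Finset.insert_subset hxR (hT.trans (Finset.erase_subset _ _)), ?_⟩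
        rw [Finset.sum_insert (fun hxT => (Finset.mem_erase.mp (hT hxT)).1 rfl)]
        omega

lemma card_H (m : ℕ) (hm : Odd m) (h1 : 1 < m) :
    2 * ((Finset.range m).filter (fun a => a.Coprime m ∧ 2 * a < m)).card = m.totient := by
  have hm2 : m % 2 = 1 := Nat.odd_iff.mp hm
  set L := (Finset.range m).filter (fun a => a.Coprime m ∧ 2 * a < m) with hL
  set U := (Finset.range m).filter (fun a => a.Coprime m ∧ m < 2 * a) with hU
  have hsplit : (Finset.range m).filter m.Coprime = L ∪ U := by
    ext a
    simp only [hL, hU, Finset.mem_union, Finset.mem_filter, Finset.mem_range]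
    constructor
    · rintro ⟨ham, hcop⟩
      have hcop' : a.Coprime m := hcop.symm
      have : 2 * a ≠ m := by omega
      rcases lt_or_gt_of_ne this with h | h
      · exact Or.inl ⟨ham, hcop', h⟩
      · exact Or.inr ⟨ham, hcop', h⟩
    · rintro (⟨ham, hcop, _⟩ | ⟨ham, hcop, _⟩) <;> exact ⟨ham, hcop.symm⟩
  have hdisj : Disjoint L U := by
    rw [Finset.disjoint_left]
    intro a haL haU
    simp only [hL, hU, Finset.mem_filter] at haL haU
    omega
  have hcard : U.card = L.card := by
    apply Finset.card_bij (fun a _ => m - a)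
    · intro a ha
      simp only [hU, Finset.mem_filter, Finset.mem_range] at ha
      simp only [hL, Finset.mem_filter, Finset.mem_range]
      obtain ⟨ham, hcop, h2a⟩ := ha
      exact ⟨by omega, (Nat.coprime_self_sub_left ham.le).mpr hcop, by omega⟩
    · intro a ha b hb hab
      simp only [hU, Finset.mem_filter, Finset.mem_range] at ha hb
      omega
    · intro b hb
      simp only [hL, Finset.mem_filter, Finset.mem_range] at hb
      obtain ⟨hbm, hcop, h2b⟩ := hb
      have hb0 : 0 < b := by
        rcases Nat.eq_zero_or_pos b with rfl | h
        · exact absurd (Nat.coprime_zero_left m |>.mp hcop) (by omega)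
        · exact h
      refine ⟨m - b, ?_, by omega⟩
      simp only [hU, Finset.mem_filter, Finset.mem_range]
      exact ⟨by omega, (Nat.coprime_self_sub_left (by omega)).mpr hcop, by omega⟩
  have : m.totient = ((Finset.range m).filter m.Coprime).card := rfl
  rw [this, hsplit, Finset.card_union_of_disjoint hdisj, hcard]
  ring

lemma two_pow_sum (n : ℕ) : ∑ i ∈ Finset.range n, 2 ^ i = 2 ^ n - 1 := by
  induction n with
  | zero => simp
  | succ k ih =>
    rw [Finset.sum_range_succ, ih, pow_succ]
    have : 1 ≤ 2 ^ k := Nat.one_le_two_pow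
    omega

lemma pow2mod3 (k : ℕ) : 2 ^ k % 3 = if k % 2 = 0 then 1 else 2 := by
  induction k with
  | zero => simp
  | succ n ih =>
    rcases Nat.mod_two_eq_zero_or_one n with h | h
    · have h1 : (n + 1) % 2 = 1 := by omega
      rw [pow_succ, Nat.mul_mod, ih, h, h1]; norm_num
    · have h1 : (n + 1) % 2 = 0 := by omega
      rw [pow_succ, Nat.mul_mod, ih, h, h1]; norm_num

lemma pow2mod5 (k : ℕ) : 2 ^ k % 5 =
    if k % 4 = 0 then 1 else if k % 4 = 1 then 2 else if k % 4 = 2 then 4 else 3 := by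
  induction k with
  | zero => simp
  | succ n ih =>
    have hlt : n % 4 < 4 := Nat.mod_lt n (by norm_num)
    have h4 : n % 4 = 0 ∨ n % 4 = 1 ∨ n % 4 = 2 ∨ n % 4 = 3 := by omega
    rcases h4 with h | h | h | h
    · have h1 : (n + 1) % 4 = 1 := by omega
      rw [pow_succ, Nat.mul_mod, ih, h, h1]; norm_num
    · have h1 : (n + 1) % 4 = 2 := by omega
      rw [pow_succ, Nat.mul_mod, ih, h, h1]; norm_num
    · have h1 : (n + 1) % 4 = 3 := by omega
      rw [pow_succ, Nat.mul_mod, ih, h, h1]; norm_num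
    · have h1 : (n + 1) % 4 = 0 := by omega
      rw [pow_succ, Nat.mul_mod, ih, h, h1]; norm_num

lemma no35 (j : ℕ) (h3 : 3 ∣ 2 ^ (j + 1) + 1) : ¬ 5 ∣ 2 ^ (j + 1) + 1 := by
  intro h5
  have e3 := pow2mod3 (j + 1)
  have e5 := pow2mod5 (j + 1)
  rw [Nat.dvd_iff_mod_eq_zero] at h3 h5
  have h3' : (2 ^ (j + 1) + 1) % 3 = (2 ^ (j + 1) % 3 + 1) % 3 := by omega
  have h5' : (2 ^ (j + 1) + 1) % 5 = (2 ^ (j + 1) % 5 + 1) % 5 := by omega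
  by_cases hj2 : (j + 1) % 2 = 0 <;> simp [hj2] at e3 <;> rw [e3] at h3' <;>
    [omega; skip]
  have hj4 : (j + 1) % 4 ≠ 0 ∧ (j + 1) % 4 ≠ 2 := by omega
  by_cases hj41 : (j + 1) % 4 = 1 <;> simp [hj41, hj4.1, hj4.2] at e5 <;> rw [e5] at h5' <;> omega

lemma exists_reps (m : ℕ) (hm : Odd m) (h1 : 1 < m)
    (h3 : m ≠ 3) (h5 : m ≠ 5) (h9 : m ≠ 9) :
    ∃ R : Finset ℕ,
      (∀ a ∈ R, a.Coprime m ∧ 0 < a ∧ a < m) ∧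
      (∀ a ∈ R, ∀ b ∈ R, a + b ≠ m) ∧
      2 * R.card = m.totient ∧
      (∀ x ∈ R, x ≤ 1 + ∑ y ∈ R.filter (· < x), y) ∧
      m - 1 ≤ ∑ y ∈ R, y := by
  have hm2 : m % 2 = 1 := Nat.odd_iff.mp hm
  set M := m / 2 with hMdef
  have hMm : m = 2 * M + 1 := by omega
  have hM1 : 1 ≤ M := by omega
  set H := (Finset.range m).filter (fun a => a.Coprime m ∧ 2 * a < m) with hH
  have hHmem : ∀ a, a ∈ H ↔ a < m ∧ a.Coprime m ∧ 2 * a < m := by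
    intro a; simp [hH]
  have hH0 : ∀ a ∈ H, 0 < a := by
    intro a ha
    rcases Nat.eq_zero_or_pos a with rfl | h
    · exact absurd (Nat.coprime_zero_left m |>.mp ((hHmem 0).mp ha).2.1) (by omega)
    · exact h
  set g : ℕ → ℕ := fun a => if a = 2 ^ Nat.log 2 a then a else m - a with hg
  set R := H.image g with hR
  set j := Nat.log 2 M with hj
  have hMj : 2 ^ j ≤ M := Nat.pow_log_le_self 2 (by omega)
  have hMj2 : M < 2 ^ (j + 1) := Nat.lt_pow_succ_log_self (by norm_num) M
  have hcop2 : Nat.Coprime 2 m := (Nat.prime_two.coprime_iff_not_dvd).mpr (by omega)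
  have hpowH : ∀ i, i ≤ j → 2 ^ i ∈ H := by
    intro i hi
    have h2i : 2 ^ i ≤ 2 ^ j := Nat.pow_le_pow_right (by norm_num) hi
    exact (hHmem _).mpr ⟨by omega, hcop2.pow_left _, by omega⟩
  have hgeq : ∀ a, a = 2 ^ Nat.log 2 a → g a = a := by
    intro a hp; simp only [hg]; rw [if_pos hp]
  have hgne : ∀ a, a ≠ 2 ^ Nat.log 2 a → g a = m - a := by
    intro a hp; simp only [hg]; rw [if_neg hp]
  have hgpow : ∀ i : ℕ, g (2 ^ i) = 2 ^ i := by
    intro i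
    exact hgeq _ (by rw [Nat.log_pow (by norm_num : 1 < 2)])
  have hpowR : ∀ i, i ≤ j → 2 ^ i ∈ R := by
    intro i hi
    rw [hR, Finset.mem_image]
    exact ⟨2 ^ i, hpowH i hi, hgpow i⟩
  -- description of elements of R
  have hRelem : ∀ x ∈ R, ∃ a, (a < m ∧ a.Coprime m ∧ 2 * a < m) ∧ g a = x := by
    intro x hx
    rw [hR, Finset.mem_image] at hx
    obtain ⟨a, ha, hax⟩ := hx
    exact ⟨a, (hHmem a).mp ha, hax⟩
  have hgprop : ∀ a ∈ H, (g a).Coprime m ∧ 0 < g a ∧ g a < m ∧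
      (2 * g a < m ∨ m < 2 * g a) := by
    intro a ha
    obtain ⟨ham, hcop, h2a⟩ := (hHmem a).mp ha
    have ha0 : 0 < a := hH0 a ha
    by_cases hp : a = 2 ^ Nat.log 2 a
    · rw [hgeq a hp]; exact ⟨hcop, ha0, by omega, by omega⟩
    · rw [hgne a hp]
      exact ⟨(Nat.coprime_self_sub_left ham.le).mpr hcop, by omega, by omega, by omega⟩
  have hR1 : ∀ x ∈ R, x.Coprime m ∧ 0 < x ∧ x < m := by
    intro x hx
    rw [hR, Finset.mem_image] at hx
    obtain ⟨a, ha, rfl⟩ := hx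
    exact ⟨(hgprop a ha).1, (hgprop a ha).2.1, (hgprop a ha).2.2.1⟩
  have hR2 : ∀ x ∈ R, ∀ y ∈ R, x + y ≠ m := by
    intro x hx y hy hxy
    rw [hR, Finset.mem_image] at hx hy
    obtain ⟨a, ha, rfl⟩ := hx
    obtain ⟨b, hb, rfl⟩ := hy
    obtain ⟨ham, hacop, h2a⟩ := (hHmem a).mp ha
    obtain ⟨hbm, hbcop, h2b⟩ := (hHmem b).mp hb
    have ha0 : 0 < a := hH0 a ha
    have hb0 : 0 < b := hH0 b hb
    by_cases hpa : a = 2 ^ Nat.log 2 a <;> by_cases hpb : b = 2 ^ Nat.log 2 b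
    · rw [hgeq a hpa, hgeq b hpb] at hxy; omega
    · rw [hgeq a hpa, hgne b hpb] at hxy
      have : a = b := by omega
      rw [this] at hpa; exact hpb hpa
    · rw [hgne a hpa, hgeq b hpb] at hxy
      have : a = b := by omega
      rw [← this] at hpb; exact hpa hpb
    · rw [hgne a hpa, hgne b hpb] at hxy; omega
  have hginj : Set.InjOn g H := by
    intro a ha b hb hab
    obtain ⟨ham, hacop, h2a⟩ := (hHmem a).mp ha
    obtain ⟨hbm, hbcop, h2b⟩ := (hHmem b).mp hb
    have ha0 : 0 < a := hH0 a ha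
    have hb0 : 0 < b := hH0 b hb
    by_cases hpa : a = 2 ^ Nat.log 2 a <;> by_cases hpb : b = 2 ^ Nat.log 2 b
    · rwa [hgeq a hpa, hgeq b hpb] at hab
    · rw [hgeq a hpa, hgne b hpb] at hab; omega
    · rw [hgne a hpa, hgeq b hpb] at hab; omega
    · rw [hgne a hpa, hgne b hpb] at hab; omega
  have hcard : 2 * R.card = m.totient := by
    rw [hR, Finset.card_image_of_injOn hginj]
    exact card_H m hm h1
  have hcopM : M.Coprime m := by
    rw [hMm]
    simpa using (Nat.coprime_mul_right_add_right M 1 2).mpr (Nat.coprime_one_right M)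
  set P := (Finset.range (j + 1)).image (fun l => 2 ^ l) with hP
  have hPmem : ∀ y, y ∈ P ↔ ∃ l, l ≤ j ∧ 2 ^ l = y := by
    intro y
    simp only [hP, Finset.mem_image, Finset.mem_range, Nat.lt_succ_iff]
  have hPsum : ∑ y ∈ P, y = 2 ^ (j + 1) - 1 := by
    rw [hP, Finset.sum_image (fun a _ b _ h => Nat.pow_right_injective (le_refl 2) h)]
    exact two_pow_sum (j + 1)
  have hPR : P ⊆ R := by
    intro y hy
    obtain ⟨l, hl, rfl⟩ := (hPmem y).mp hy
    exact hpowR l hl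
  have hpsucc : (2:ℕ) ^ (j + 1) = 2 * 2 ^ j := by ring
  refine ⟨R, hR1, hR2, hcard, ?_, ?_⟩
  · -- gap condition
    intro x hx
    obtain ⟨a, ⟨ham, hacop, h2a⟩, rfl⟩ := hRelem x hx
    have haH : a ∈ H := (hHmem a).mpr ⟨ham, hacop, h2a⟩
    have ha0 : 0 < a := hH0 a haH
    have haM : a ≤ M := by omega
    by_cases hpa : a = 2 ^ Nat.log 2 a
    · have hga : g a = a := hgeq a hpa
      rw [hga]
      set i := Nat.log 2 a with hi
      have hij : i ≤ j := by rw [hi, hj]; exact Nat.log_mono_right haM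
      have hsub : (Finset.range i).image (fun l => 2 ^ l) ⊆ R.filter (· < a) := by
        intro y hy
        simp only [Finset.mem_image, Finset.mem_range] at hy
        obtain ⟨l, hl, rfl⟩ := hy
        refine Finset.mem_filter.mpr ⟨hpowR l (by omega), ?_⟩
        calc 2 ^ l < 2 ^ i := Nat.pow_lt_pow_right (by norm_num) hl
        _ = a := hpa.symm
      have hsum : ∑ y ∈ (Finset.range i).image (fun l => 2 ^ l), y = 2 ^ i - 1 := by
        rw [Finset.sum_image (fun a _ b _ h => Nat.pow_right_injective (le_refl 2) h)]
        exact two_pow_sum i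
      have hle : ∑ y ∈ (Finset.range i).image (fun l => 2 ^ l), y
          ≤ ∑ y ∈ R.filter (· < a), y := Finset.sum_le_sum_of_subset hsub
      have h2i : 1 ≤ 2 ^ i := Nat.one_le_two_pow
      omega
    · have hga : g a = m - a := hgne a hpa
      have hgaM : M + 1 ≤ g a := by omega
      have hgam : g a ≤ m - 1 := by omega
      have hPfil : P ⊆ R.filter (· < g a) := by
        intro y hy
        obtain ⟨l, hl, rfl⟩ := (hPmem y).mp hy
        refine Finset.mem_filter.mpr ⟨hpowR l hl, ?_⟩
        have : 2 ^ l ≤ 2 ^ j := Nat.pow_le_pow_right (by norm_num) hl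
        omega
      have hle : ∑ y ∈ P, y ≤ ∑ y ∈ R.filter (· < g a), y :=
        Finset.sum_le_sum_of_subset hPfil
      by_cases hMp : M = 2 ^ Nat.log 2 M
      · rw [← hj] at hMp
        omega
      · have hMH : M ∈ H := (hHmem M).mpr ⟨by omega, hcopM, by omega⟩
        have hMR : M + 1 ∈ R := by
          rw [hR, Finset.mem_image]
          refine ⟨M, hMH, ?_⟩
          rw [hgne M (by rw [← hj]; exact hMp)]
          omega
        by_cases hxM : g a = M + 1
        · omega
        · have hnotin : M + 1 ∉ P := by
            intro h
            obtain ⟨l, hl, heq⟩ := (hPmem _).mp h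
            have : 2 ^ l ≤ 2 ^ j := Nat.pow_le_pow_right (by norm_num) hl
            omega
          have hsub2 : insert (M + 1) P ⊆ R.filter (· < g a) := by
            intro y hy
            rcases Finset.mem_insert.mp hy with rfl | hy
            · exact Finset.mem_filter.mpr ⟨hMR, by omega⟩
            · exact hPfil hy
          have hsum2 : ∑ y ∈ insert (M + 1) P, y = (M + 1) + (2 ^ (j + 1) - 1) := by
            rw [Finset.sum_insert hnotin, hPsum]
          have hle2 : ∑ y ∈ insert (M + 1) P, y ≤ ∑ y ∈ R.filter (· < g a), y :=
            Finset.sum_le_sum_of_subset hsub2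
          omega
  · -- total sum is at least m - 1
    by_cases hMp : M = 2 ^ Nat.log 2 M
    · rw [← hj] at hMp
      have hm' : m = 2 ^ (j + 1) + 1 := by omega
      have hj3 : 3 ≤ j := by
        by_contra hcon
        have : j = 0 ∨ j = 1 ∨ j = 2 := by omega
        rcases this with h | h | h <;> rw [h] at hm' <;> norm_num at hm' <;> omega
      have hM8 : 8 ≤ M := by
        have : (2:ℕ) ^ 3 ≤ 2 ^ j := Nat.pow_le_pow_right (by norm_num) hj3
        norm_num at this
        omega
      have hkey : ∃ e, e.Coprime m ∧ (e = 3 ∨ e = 5) ∧ e ≠ 2 ^ Nat.log 2 e := by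
        by_cases h3d : 3 ∣ m
        · have h5d : ¬ 5 ∣ m := by
            rw [hm']
            exact no35 j (hm' ▸ h3d)
          exact ⟨5, ((by norm_num : Nat.Prime 5).coprime_iff_not_dvd).mpr h5d, Or.inr rfl,
            by rw [Nat.log_eq_of_pow_le_of_lt_pow (by norm_num : 2^2 ≤ 5) (by norm_num)]; norm_num⟩
        · exact ⟨3, ((by norm_num : Nat.Prime 3).coprime_iff_not_dvd).mpr h3d, Or.inl rfl,
            by rw [Nat.log_eq_of_pow_le_of_lt_pow (by norm_num : 2^1 ≤ 3) (by norm_num)]; norm_num⟩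
      obtain ⟨e, hecop, he35, hep⟩ := hkey
      have he5 : 3 ≤ e ∧ e ≤ 5 := by rcases he35 with rfl | rfl <;> omega
      have heH : e ∈ H := (hHmem e).mpr ⟨by omega, hecop, by omega⟩
      have heR : m - e ∈ R := by
        rw [hR, Finset.mem_image]
        exact ⟨e, heH, hgne e hep⟩
      have henotP : m - e ∉ P := by
        intro h
        obtain ⟨l, hl, heq⟩ := (hPmem _).mp h
        have : 2 ^ l ≤ 2 ^ j := Nat.pow_le_pow_right (by norm_num) hl
        omega
      have hsub : insert (m - e) P ⊆ R := by
        intro y hy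
        rcases Finset.mem_insert.mp hy with rfl | hy
        · exact heR
        · exact hPR hy
      have hsum2 : ∑ y ∈ insert (m - e) P, y = (m - e) + (2 ^ (j + 1) - 1) := by
        rw [Finset.sum_insert henotP, hPsum]
      have hle : ∑ y ∈ insert (m - e) P, y ≤ ∑ y ∈ R, y :=
        Finset.sum_le_sum_of_subset hsub
      omega
    · have hMH : M ∈ H := (hHmem M).mpr ⟨by omega, hcopM, by omega⟩
      have hMR : M + 1 ∈ R := by
        rw [hR, Finset.mem_image]
        refine ⟨M, hMH, ?_⟩
        rw [hgne M (by rw [← hj]; exact hMp)]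
        omega
      have hnotin : M + 1 ∉ P := by
        intro h
        obtain ⟨l, hl, heq⟩ := (hPmem _).mp h
        have : 2 ^ l ≤ 2 ^ j := Nat.pow_le_pow_right (by norm_num) hl
        omega
      have hsub : insert (M + 1) P ⊆ R := by
        intro y hy
        rcases Finset.mem_insert.mp hy with rfl | hy
        · exact hMR
        · exact hPR hy
      have hsum2 : ∑ y ∈ insert (M + 1) P, y = (M + 1) + (2 ^ (j + 1) - 1) := by
        rw [Finset.sum_insert hnotin, hPsum]
      have hle : ∑ y ∈ insert (M + 1) P, y ≤ ∑ y ∈ R, y :=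
        Finset.sum_le_sum_of_subset hsub
      omega

lemma mem_delta (m : ℕ) (hm : Odd m) (h1 : 1 < m) (ζ : ℂ) (hζ : IsPrimitiveRoot ζ m)
    (R : Finset ℕ) (hR1 : ∀ a ∈ R, a.Coprime m ∧ 0 < a ∧ a < m)
    (hR2 : ∀ a ∈ R, ∀ b ∈ R, a + b ≠ m)
    (hR3 : R.card = m.totient / 2)
    (hgap : ∀ x ∈ R, x ≤ 1 + ∑ y ∈ R.filter (· < x), y)
    (r t : ℕ) (ht : t ≤ ∑ y ∈ R, y)
    (htr : ((2 * t + r : ℕ) : ZMod m) = ((∑ y ∈ R, y : ℕ) : ZMod m)) :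
    ζ ^ r ∈ Delta m := by
  obtain ⟨T, hTR, hTs⟩ := subsum R hgap t ht
  set f : ℕ → ℕ := fun a => if a ∈ T then m - a else a with hf
  -- basic properties of f on R
  have hfprop : ∀ a ∈ R, (f a).Coprime m ∧ 0 < f a ∧ f a < m := by
    intro a ha
    obtain ⟨hcop, ha0, ham⟩ := hR1 a ha
    by_cases haT : a ∈ T <;> simp only [hf, haT, if_true, if_false]
    · exact ⟨(Nat.coprime_self_sub_left ham.le).mpr hcop, by omega, by omega⟩
    · exact ⟨hcop, ha0, ham⟩
  have hfinj : ∀ a ∈ R, ∀ b ∈ R, f a = f b → a = b := by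
    intro a ha b hb hab
    obtain ⟨_, ha0, ham⟩ := hR1 a ha
    obtain ⟨_, hb0, hbm⟩ := hR1 b hb
    by_cases haT : a ∈ T <;> by_cases hbT : b ∈ T <;>
      simp only [hf, haT, hbT, if_true, if_false] at hab
    · omega
    · exact absurd (by omega : a + b = m) (hR2 a ha b hb)
    · exact absurd (by omega : a + b = m) (hR2 a ha b hb)
    · exact hab
  set s : Finset ℂ := R.image (fun a => ζ ^ f a) with hs
  have hpowinj : ∀ a ∈ R, ∀ b ∈ R, ζ ^ f a = ζ ^ f b → a = b := by
    intro a ha b hb hab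
    exact hfinj a ha b hb (hζ.pow_inj (hfprop a ha).2.2 (hfprop b hb).2.2 hab)
  refine ⟨s, ?_, ?_, ?_, ?_⟩
  · intro z hz
    simp only [hs, Finset.coe_image, Set.mem_image, Finset.mem_coe] at hz
    obtain ⟨a, ha, rfl⟩ := hz
    exact hζ.pow_of_coprime _ (hfprop a ha).1
  · rw [hs, Finset.card_image_of_injOn hpowinj, hR3]
  · intro x hx y hy hxy
    simp only [hs, Finset.mem_image] at hx hy
    obtain ⟨a, ha, rfl⟩ := hx
    obtain ⟨b, hb, rfl⟩ := hy
    rw [← pow_add, hζ.pow_eq_one_iff_dvd] at hxy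
    obtain ⟨_, ha0, ham⟩ := hfprop a ha
    obtain ⟨_, hb0, hbm⟩ := hfprop b hb
    have hsum : f a + f b = m := by
      rcases hxy with ⟨c, hc⟩
      have hc2 : c < 2 := by
        by_contra hcc
        push_neg at hcc
        have := Nat.mul_le_mul_left m hcc
        omega
      have hc0 : c ≠ 0 := by rintro rfl; omega
      have : c = 1 := by omega
      subst this; omega
    obtain ⟨_, ha0', ham'⟩ := hR1 a ha
    obtain ⟨_, hb0', hbm'⟩ := hR1 b hb
    by_cases haT : a ∈ T <;> by_cases hbT : b ∈ T <;>
      simp only [hf, haT, hbT, if_true, if_false] at hsum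
    · exact hR2 a ha b hb (by omega)
    · have : a = b := by omega
      subst this; exact hbT haT
    · have : a = b := by omega
      subst this; exact haT hbT
    · exact hR2 a ha b hb hsum
  · rw [hs, Finset.prod_image hpowinj, Finset.prod_pow_eq_pow_sum]
    have hmodeq : ((∑ i ∈ R, f i : ℕ) : ZMod m) = ((r : ℕ) : ZMod m) → ζ ^ ∑ i ∈ R, f i = ζ ^ r := by
      intro hmod
      rw [ZMod.natCast_eq_natCast_iff'] at hmod
      have hpowmod : ∀ n : ℕ, ζ ^ n = ζ ^ (n % m) := by
        intro n
        conv_lhs => rw [← Nat.mod_add_div n m, pow_add, pow_mul, hζ.pow_eq_one, one_pow, mul_one]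
      rw [hpowmod, hmod, ← hpowmod]
    apply hmodeq
    have h1 : ∑ a ∈ R \ T, ((f a : ℕ) : ZMod m) = ∑ a ∈ R \ T, (a : ZMod m) := by
      refine Finset.sum_congr rfl fun a ha => ?_
      simp only [hf, (Finset.mem_sdiff.mp ha).2, if_false]
    have h2 : ∑ a ∈ T, ((f a : ℕ) : ZMod m) = -∑ a ∈ T, (a : ZMod m) := by
      rw [← Finset.sum_neg_distrib]
      refine Finset.sum_congr rfl fun a ha => ?_
      simp only [hf, ha, if_true]
      obtain ⟨_, _, ham⟩ := hR1 a (hTR ha)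
      push_cast [Nat.cast_sub ham.le]
      simp
    have ht2 : ((t : ℕ) : ZMod m) = ∑ a ∈ T, (a : ZMod m) := by
      rw [← hTs]; push_cast; ring
    have hcast : ((∑ a ∈ R, f a : ℕ) : ZMod m)
        = ((∑ a ∈ R, a : ℕ) : ZMod m) - 2 * ((t : ℕ) : ZMod m) := by
      push_cast
      rw [← Finset.sum_sdiff hTR (f := fun a => ((f a : ℕ) : ZMod m)),
        ← Finset.sum_sdiff hTR (f := fun a : ℕ => (a : ZMod m)), h1, h2]
      push_cast at ht2
      rw [ht2]
      ring
    rw [hcast, ← htr]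
    push_cast
    ring

lemma delta_sub_rset (m : ℕ) : Delta m ⊆ Rset m := by
  rintro z ⟨s, hsub, _, _, rfl⟩
  show (∏ x ∈ s, x) ^ m = 1
  rw [← Finset.prod_pow]
  exact Finset.prod_eq_one fun x hx => (hsub hx).pow_eq_one

lemma rset_sub_delta (m : ℕ) (hm : Odd m) (h1 : 1 < m)
    (h3 : m ≠ 3) (h5 : m ≠ 5) (h9 : m ≠ 9) : Rset m ⊆ Delta m := by
  have hm0 : m ≠ 0 := by omega
  haveI : NeZero m := ⟨hm0⟩
  set ζ := Complex.exp (2 * Real.pi * Complex.I / m) with hzeta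
  have hζ : IsPrimitiveRoot ζ m := Complex.isPrimitiveRoot_exp m hm0
  intro z hz
  obtain ⟨r, hrm, rfl⟩ := hζ.eq_pow_of_pow_eq_one hz
  obtain ⟨R, hR1, hR2, hcard, hgap, hsum⟩ := exists_reps m hm h1 h3 h5 h9
  have hcop2 : Nat.Coprime 2 m :=
    (Nat.prime_two.coprime_iff_not_dvd).mpr (by
      have := Nat.odd_iff.mp hm; omega)
  set S : ZMod m := ((∑ y ∈ R, y : ℕ) : ZMod m) with hS
  set tz : ZMod m := (S - (r : ZMod m)) * (2 : ZMod m)⁻¹ with htz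
  have h2inv : (2 : ZMod m) * (2 : ZMod m)⁻¹ = 1 := by
    have := ZMod.coe_mul_inv_eq_one (n := m) 2 hcop2
    push_cast at this
    exact this
  refine mem_delta m hm h1 ζ hζ R hR1 hR2 (by omega) hgap r tz.val ?_ ?_
  · have := ZMod.val_lt tz
    omega
  · push_cast
    rw [ZMod.natCast_val, ZMod.cast_id, htz]
    calc 2 * ((S - (r : ZMod m)) * (2 : ZMod m)⁻¹) + (r : ZMod m)
        = (2 * (2 : ZMod m)⁻¹) * (S - (r : ZMod m)) + (r : ZMod m) := by ring
      _ = S := by rw [h2inv]; ring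
      _ = ∑ x ∈ R, (x : ZMod m) := by rw [hS]; push_cast; ring

lemma rset_sub_delta_ex (m : ℕ) (hmem : m = 3 ∨ m = 5 ∨ m = 9) :
    Rset m \ {1} ⊆ Delta m := by
  have hm0 : m ≠ 0 := by rcases hmem with rfl | rfl | rfl <;> norm_num
  haveI : NeZero m := ⟨hm0⟩
  set ζ := Complex.exp (2 * Real.pi * Complex.I / m) with hzeta
  have hζ : IsPrimitiveRoot ζ m := Complex.isPrimitiveRoot_exp m hm0
  rintro z ⟨hz, hz1⟩
  obtain ⟨r, hrm, rfl⟩ := hζ.eq_pow_of_pow_eq_one hz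
  have hr0 : r ≠ 0 := by
    rintro rfl
    exact hz1 (by simp)
  have hr1 : 1 ≤ r := by omega
  rcases hmem with rfl | rfl | rfl
  · interval_cases r
    · exact mem_delta 3 (by decide) (by norm_num) ζ hζ {1} (by decide) (by decide)
        (by decide) (by decide) 1 0 (by decide) (by decide)
    · exact mem_delta 3 (by decide) (by norm_num) ζ hζ {1} (by decide) (by decide)
        (by decide) (by decide) 2 1 (by decide) (by decide)
  · interval_cases r
    · exact mem_delta 5 (by decide) (by norm_num) ζ hζ {1, 2} (by decide) (by decide)
        (by decide) (by decide) 1 1 (by decide) (by decide)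
    · exact mem_delta 5 (by decide) (by norm_num) ζ hζ {1, 2} (by decide) (by decide)
        (by decide) (by decide) 2 3 (by decide) (by decide)
    · exact mem_delta 5 (by decide) (by norm_num) ζ hζ {1, 2} (by decide) (by decide)
        (by decide) (by decide) 3 0 (by decide) (by decide)
    · exact mem_delta 5 (by decide) (by norm_num) ζ hζ {1, 2} (by decide) (by decide)
        (by decide) (by decide) 4 2 (by decide) (by decide)
  · interval_cases r
    · exact mem_delta 9 (by decide) (by norm_num) ζ hζ {1, 2, 4} (by decide) (by decide)
        (by decide) (by decide) 1 3 (by decide) (by decide)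
    · exact mem_delta 9 (by decide) (by norm_num) ζ hζ {1, 2, 4} (by decide) (by decide)
        (by decide) (by decide) 2 7 (by decide) (by decide)
    · exact mem_delta 9 (by decide) (by norm_num) ζ hζ {1, 2, 4} (by decide) (by decide)
        (by decide) (by decide) 3 2 (by decide) (by decide)
    · exact mem_delta 9 (by decide) (by norm_num) ζ hζ {1, 2, 4} (by decide) (by decide)
        (by decide) (by decide) 4 6 (by decide) (by decide)
    · exact mem_delta 9 (by decide) (by norm_num) ζ hζ {1, 2, 4} (by decide) (by decide)
        (by decide) (by decide) 5 1 (by decide) (by decide)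
    · exact mem_delta 9 (by decide) (by norm_num) ζ hζ {1, 2, 4} (by decide) (by decide)
        (by decide) (by decide) 6 5 (by decide) (by decide)
    · exact mem_delta 9 (by decide) (by norm_num) ζ hζ {1, 2, 4} (by decide) (by decide)
        (by decide) (by decide) 7 0 (by decide) (by decide)
    · exact mem_delta 9 (by decide) (by norm_num) ζ hζ {1, 2, 4} (by decide) (by decide)
        (by decide) (by decide) 8 4 (by decide) (by decide)

lemma delta_sub_ex (m : ℕ) (hmem : m = 3 ∨ m = 5 ∨ m = 9) :
    Delta m ⊆ Rset m \ {1} := by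
  intro z hz
  refine ⟨delta_sub_rset m hz, ?_⟩
  obtain ⟨s, hsub, hcardS, hne, rfl⟩ := hz
  simp only [Set.mem_singleton_iff]
  intro hone
  rcases hmem with rfl | rfl | rfl
  · rw [show Nat.totient 3 / 2 = 1 by decide] at hcardS
    obtain ⟨x, rfl⟩ := Finset.card_eq_one.mp hcardS
    rw [Finset.prod_singleton] at hone
    have hx : IsPrimitiveRoot x 3 := hsub (by simp)
    rw [hone] at hx
    exact hx.pow_ne_one_of_pos_of_lt one_ne_zero (by norm_num) (one_pow 1)
  · rw [show Nat.totient 5 / 2 = 2 by decide] at hcardS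
    obtain ⟨x, y, hxy, rfl⟩ := Finset.card_eq_two.mp hcardS
    rw [Finset.prod_pair hxy] at hone
    exact hne x (by simp) y (by simp) hone
  · rw [show Nat.totient 9 / 2 = 3 by decide] at hcardS
    obtain ⟨x, y, w, hxy, hxw, hyw, rfl⟩ := Finset.card_eq_three.mp hcardS
    have hprod : x * y * w = 1 := by
      rw [Finset.prod_insert (by simp [hxy, hxw]), Finset.prod_pair hyw] at hone
      rw [← mul_assoc] at hone
      exact hone
    haveI : NeZero (9 : ℕ) := ⟨by norm_num⟩
    set ζ := Complex.exp (2 * Real.pi * Complex.I / (9:ℕ)) with hzeta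
    have hζ : IsPrimitiveRoot ζ 9 := Complex.isPrimitiveRoot_exp 9 (by norm_num)
    have hxP : IsPrimitiveRoot x 9 := hsub (by simp)
    have hyP : IsPrimitiveRoot y 9 := hsub (by simp)
    have hwP : IsPrimitiveRoot w 9 := hsub (by simp)
    obtain ⟨a, ha9, hxa⟩ := hζ.eq_pow_of_pow_eq_one hxP.pow_eq_one
    obtain ⟨b, hb9, hyb⟩ := hζ.eq_pow_of_pow_eq_one hyP.pow_eq_one
    obtain ⟨c, hc9, hwc⟩ := hζ.eq_pow_of_pow_eq_one hwP.pow_eq_one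
    have hacop : a.Coprime 9 := by
      rw [← hxa] at hxP
      exact (hζ.pow_iff_coprime (by norm_num) a).mp hxP
    have hbcop : b.Coprime 9 := by
      rw [← hyb] at hyP
      exact (hζ.pow_iff_coprime (by norm_num) b).mp hyP
    have hccop : c.Coprime 9 := by
      rw [← hwc] at hwP
      exact (hζ.pow_iff_coprime (by norm_num) c).mp hwP
    have hnd : ∀ n : ℕ, n.Coprime 9 → ¬ 3 ∣ n := by
      intro n hn hdvd
      have h31 : (3:ℕ) ∣ 1 := hn ▸ Nat.dvd_gcd hdvd (by norm_num)
      norm_num at h31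
    have hab : ¬ (9:ℕ) ∣ a + b := by
      intro hd
      exact hne x (by simp) y (by simp)
        (by rw [← hxa, ← hyb, ← pow_add, hζ.pow_eq_one_iff_dvd]; exact hd)
    have hac : ¬ (9:ℕ) ∣ a + c := by
      intro hd
      exact hne x (by simp) w (by simp)
        (by rw [← hxa, ← hwc, ← pow_add, hζ.pow_eq_one_iff_dvd]; exact hd)
    have hbc : ¬ (9:ℕ) ∣ b + c := by
      intro hd
      exact hne y (by simp) w (by simp)
        (by rw [← hyb, ← hwc, ← pow_add, hζ.pow_eq_one_iff_dvd]; exact hd)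
    have habc : (9:ℕ) ∣ a + b + c := by
      rw [← hζ.pow_eq_one_iff_dvd, pow_add, pow_add, hxa, hyb, hwc]
      exact hprod
    have hab' : a ≠ b := fun h => hxy (by rw [← hxa, ← hyb, h])
    have hac' : a ≠ c := fun h => hxw (by rw [← hxa, ← hwc, h])
    have hbc' : b ≠ c := fun h => hyw (by rw [← hyb, ← hwc, h])
    have h3a := hnd a hacop
    have h3b := hnd b hbcop
    have h3c := hnd c hccop
    have key : ∀ a b c : Fin 9, ¬3 ∣ a.val → ¬3 ∣ b.val → ¬3 ∣ c.val →
        a.val ≠ b.val → a.val ≠ c.val → b.val ≠ c.val →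
        ¬(9 ∣ a.val + b.val) → ¬(9 ∣ a.val + c.val) → ¬(9 ∣ b.val + c.val) →
        ¬(9 ∣ a.val + b.val + c.val) := by decide
    exact key ⟨a, ha9⟩ ⟨b, hb9⟩ ⟨c, hc9⟩ h3a h3b h3c hab' hac' hbc' hab hac hbc habc

theorem Delta_eq (m : ℕ) (hm : Odd m) (h1 : 1 < m) :
    (m ∉ ({3, 5, 9} : Set ℕ) → Delta m = Rset m) ∧
      (m ∈ ({3, 5, 9} : Set ℕ) → Delta m = Rset m \ {1}) := by
  constructor
  · intro hnot
    simp only [Set.mem_insert_iff, Set.mem_singleton_iff] at hnot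
    push_neg at hnot
    obtain ⟨h3, h5, h9⟩ := hnot
    exact Set.Subset.antisymm (delta_sub_rset m) (rset_sub_delta m hm h1 h3 h5 h9)
  · intro hmem
    simp only [Set.mem_insert_iff, Set.mem_singleton_iff] at hmem
    exact Set.Subset.antisymm (delta_sub_ex m hmem) (rset_sub_delta_ex m hmem)
end

section
/- Let n ≥ 4 be even and let d₁, …, dₙ be nonzero complex roots of unity of odd order such that the multiset {d₁, …, dₙ} is closed under inversion (i.e., the diagonal matrix g = diag(d₁,…,dₙ) is similar to g⁻¹). Suppose d_{i₁} d_{i₂} d_{i₃} = 1 for some pairwise distinct indices i₁, i₂, i₃. Then for every j with 2 ≤ j ≤ n − 2, there exist pairwise distinct indices k₁, …, k_j with d_{k₁}⋯d_{k_j} = 1. -/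
open scoped Pointwise

/-- A root of unity of odd order whose square is 1 must be 1. -/
lemma aux_sq_one {x : ℂ} {m : ℕ} (hm : Odd m) (hxm : x ^ m = 1) (hx2 : x ^ 2 = 1) :
    x = 1 := by
  have h2 : orderOf x ∣ 2 := orderOf_dvd_of_pow_eq_one hx2
  have hm' : orderOf x ∣ m := orderOf_dvd_of_pow_eq_one hxm
  have hcop : Nat.Coprime 2 m := (Nat.prime_two.coprime_iff_not_dvd).mpr (by
    have := Nat.odd_iff.mp hm; omega)
  have hgcd : orderOf x ∣ Nat.gcd 2 m := Nat.dvd_gcd h2 hm'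
  rw [hcop] at hgcd
  exact orderOf_eq_one_iff.mp (Nat.dvd_one.mp hgcd)

/-- Pairing lemma: a finite index set whose multiset of `d`-values is closed under
inversion and avoids 1 admits a fixed-point-free pairing involution. -/
lemma pairing_lemma {n : ℕ} (d : Fin n → ℂ)
    (hinj : ∀ i, d i ≠ 1 → d i ≠ (d i)⁻¹) :
    ∀ N (C : Finset (Fin n)), C.card ≤ N →
      (∀ x : ℂ, (C.val.map d).count x = (C.val.map d).count x⁻¹) →
      (∀ i ∈ C, d i ≠ 1) →
      ∃ τ : Fin n → Fin n, (∀ i, τ (τ i) = i) ∧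
        (∀ i ∈ C, τ i ∈ C ∧ τ i ≠ i ∧ d (τ i) = (d i)⁻¹) ∧
        (∀ i, i ∉ C → τ i = i) := by
  intro N
  induction N with
  | zero =>
    intro C hC _ _
    have : C = ∅ := Finset.card_eq_zero.mp (Nat.le_zero.mp hC)
    subst this
    exact ⟨id, fun i => rfl, by simp, fun i _ => rfl⟩
  | succ N ih =>
    intro C hC hH hone
    rcases C.eq_empty_or_nonempty with rfl | ⟨i, hi⟩
    · exact ⟨id, fun i => rfl, by simp, fun i _ => rfl⟩
    · have hx1 : d i ≠ 1 := hone i hi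
      have hxne : d i ≠ (d i)⁻¹ := hinj i hx1
      have hmem : d i ∈ C.val.map d := Multiset.mem_map_of_mem d (Finset.mem_val.mpr hi)
      have hcount : 0 < (C.val.map d).count (d i)⁻¹ := by
        rw [← hH (d i)]
        exact Multiset.count_pos.mpr hmem
      have hmem' : (d i)⁻¹ ∈ C.val.map d := Multiset.count_pos.mp hcount
      obtain ⟨i', hi'v, hdi'⟩ := Multiset.mem_map.mp hmem'
      have hi'C : i' ∈ C := Finset.mem_val.mp hi'v
      have hii' : i' ≠ i := by
        rintro rfl
        exact hxne hdi'
      set C' := (C.erase i).erase i' with hC'def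
      have hi'e : i' ∈ C.erase i := Finset.mem_erase.mpr ⟨hii', hi'C⟩
      have hC'val : C.val = i ::ₘ i' ::ₘ C'.val := by
        rw [hC'def, Finset.erase_val, Finset.erase_val,
          Multiset.cons_erase (by rw [← Finset.erase_val]; exact Finset.mem_val.mpr hi'e),
          Multiset.cons_erase (Finset.mem_val.mpr hi)]
      have hC'card : C'.card ≤ N := by
        have h1 : (C.erase i).card = C.card - 1 := Finset.card_erase_of_mem hi
        have h2 : C'.card = (C.erase i).card - 1 := Finset.card_erase_of_mem hi'e
        omega
      have hC'H : ∀ y : ℂ, (C'.val.map d).count y = (C'.val.map d).count y⁻¹ := by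
        intro y
        have h0 := hH y
        rw [hC'val] at h0
        simp only [Multiset.map_cons, Multiset.count_cons, hdi'] at h0
        have iff1 : (y⁻¹ = (d i)⁻¹) ↔ (y = d i) :=
          ⟨fun h => inv_injective h, fun h => by rw [h]⟩
        have iff2 : (y⁻¹ = d i) ↔ (y = (d i)⁻¹) :=
          ⟨fun h => by rw [← h, inv_inv], fun h => by rw [h, inv_inv]⟩
        rw [if_congr iff1 rfl rfl, if_congr iff2 rfl rfl] at h0
        split_ifs at h0 <;> omega
      have hC'one : ∀ k ∈ C', d k ≠ 1 := fun k hk =>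
        hone k (Finset.mem_of_mem_erase (Finset.mem_of_mem_erase hk))
      obtain ⟨τ', hτ'inv, hτ'mem, hτ'fix⟩ := ih C' hC'card hC'H hC'one
      have hiC' : i ∉ C' := fun h =>
        (Finset.notMem_erase i C) (Finset.mem_of_mem_erase h)
      have hi'C' : i' ∉ C' := Finset.notMem_erase i' (C.erase i)
      have hτ'i : τ' i = i := hτ'fix i hiC'
      have hτ'i' : τ' i' = i' := hτ'fix i' hi'C'
      have hτ₀ : ∀ k : Fin n, (fun k => if k = i then i' else if k = i' then i else τ' k) k
          = if k = i then i' else if k = i' then i else τ' k := fun _ => rfl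
      refine ⟨fun k => if k = i then i' else if k = i' then i else τ' k, ?_, ?_, ?_⟩
      · intro k
        rw [hτ₀, hτ₀]
        by_cases hk : k = i
        · rw [if_pos hk, if_neg hii', if_pos rfl, hk]
        · by_cases hk' : k = i'
          · rw [if_neg hk, if_pos hk', if_pos rfl, hk']
          · rw [if_neg hk, if_neg hk']
            by_cases hkc : k ∈ C'
            · have h1 := (hτ'mem k hkc).1
              have h2 : τ' k ≠ i := fun h => hiC' (h ▸ h1)
              have h3 : τ' k ≠ i' := fun h => hi'C' (h ▸ h1)
              rw [if_neg h2, if_neg h3]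
              exact hτ'inv k
            · rw [hτ'fix k hkc, if_neg hk, if_neg hk', hτ'fix k hkc]
      · intro k hk
        rw [hτ₀]
        by_cases hkeq : k = i
        · rw [if_pos hkeq, hkeq]
          exact ⟨hi'C, hii', hdi'⟩
        · by_cases hkeq' : k = i'
          · rw [if_neg hkeq, if_pos hkeq', hkeq']
            refine ⟨hi, fun h => hii' h.symm, ?_⟩
            rw [hdi', inv_inv]
          · have hkc : k ∈ C' := Finset.mem_erase.mpr ⟨hkeq', Finset.mem_erase.mpr ⟨hkeq, hk⟩⟩
            rw [if_neg hkeq, if_neg hkeq']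
            obtain ⟨h1, h2, h3⟩ := hτ'mem k hkc
            exact ⟨Finset.mem_of_mem_erase (Finset.mem_of_mem_erase h1), h2, h3⟩
      · intro k hk
        rw [hτ₀]
        have hk1 : k ≠ i := fun h => hk (h ▸ hi)
        have hk2 : k ≠ i' := fun h => hk (h ▸ hi'C)
        have hkc : k ∉ C' := fun h =>
          hk (Finset.mem_of_mem_erase (Finset.mem_of_mem_erase h))
        rw [if_neg hk1, if_neg hk2, hτ'fix k hkc]

/-- Extraction lemma: from a τ-invariant set we can extract `2p` indices whose
`d`-product is 1. -/
lemma extract_lemma {n : ℕ} (d : Fin n → ℂ) (h0 : ∀ i, d i ≠ 0)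
    (τ : Fin n → Fin n) (hτ : ∀ i, τ (τ i) = i) :
    ∀ p (C : Finset (Fin n)),
      (∀ i ∈ C, τ i ∈ C ∧ τ i ≠ i ∧ d (τ i) = (d i)⁻¹) →
      2 * p ≤ C.card →
      ∃ s, s ⊆ C ∧ s.card = 2 * p ∧ ∏ i ∈ s, d i = 1 := by
  intro p
  induction p with
  | zero => exact fun C _ _ => ⟨∅, by simp⟩
  | succ p ih =>
    intro C hC hcard
    have hCne : C.Nonempty := by
      rw [← Finset.card_pos]; omega
    obtain ⟨i, hi⟩ := hCne
    obtain ⟨hτi, hτne, hτd⟩ := hC i hi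
    set C' := (C.erase i).erase (τ i) with hC'def
    have hτie : τ i ∈ C.erase i := Finset.mem_erase.mpr ⟨hτne, hτi⟩
    have hsub : C' ⊆ C := (Finset.erase_subset _ _).trans (Finset.erase_subset _ _)
    have hC'card : C'.card = C.card - 2 := by
      have h1 : (C.erase i).card = C.card - 1 := Finset.card_erase_of_mem hi
      have h2 : C'.card = (C.erase i).card - 1 := Finset.card_erase_of_mem hτie
      omega
    have hinv' : ∀ k ∈ C', τ k ∈ C' ∧ τ k ≠ k ∧ d (τ k) = (d k)⁻¹ := by
      intro k hk
      have hkC := hsub hk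
      obtain ⟨h1, h2, h3⟩ := hC k hkC
      have hk1 : k ≠ τ i := (Finset.mem_erase.mp hk).1
      have hk2 : k ≠ i := (Finset.mem_erase.mp ((Finset.mem_erase.mp hk).2)).1
      refine ⟨Finset.mem_erase.mpr ⟨?_, Finset.mem_erase.mpr ⟨?_, h1⟩⟩, h2, h3⟩
      · intro h
        apply hk2
        have := congrArg τ h
        rwa [hτ, hτ] at this
      · intro h
        apply hk1
        rw [← h, hτ]
    obtain ⟨s', hs'sub, hs'card, hs'prod⟩ := ih C' hinv' (by omega)
    have hτis' : τ i ∉ s' := fun h =>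
      Finset.notMem_erase (τ i) (C.erase i) (hs'sub h)
    have his' : i ∉ insert (τ i) s' := by
      simp only [Finset.mem_insert]
      rintro (h | h)
      · exact hτne h.symm
      · exact Finset.notMem_erase i C (Finset.mem_of_mem_erase (hs'sub h))
    refine ⟨insert i (insert (τ i) s'), ?_, ?_, ?_⟩
    · intro k hk
      simp only [Finset.mem_insert] at hk
      rcases hk with rfl | rfl | h
      · exact hi
      · exact hτi
      · exact hsub (hs'sub h)
    · rw [Finset.card_insert_of_notMem his',
        Finset.card_insert_of_notMem hτis', hs'card]
      ring
    · rw [Finset.prod_insert his', Finset.prod_insert hτis', hs'prod, mul_one,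
        hτd, mul_inv_cancel₀ (h0 i)]

theorem eigenvalue_one_on_exterior_powers (n : ℕ) (hn4 : 4 ≤ n) (hn : Even n)
    (d : Fin n → ℂ)
    (hroots : ∀ i, ∃ m : ℕ, Odd m ∧ d i ^ m = 1)
    (hreal : ∃ σ : Equiv.Perm (Fin n), ∀ i, d (σ i) = (d i)⁻¹)
    (htriple : ∃ i₁ i₂ i₃ : Fin n, i₁ ≠ i₂ ∧ i₁ ≠ i₃ ∧ i₂ ≠ i₃ ∧
      d i₁ * d i₂ * d i₃ = 1) :
    ∀ j : ℕ, 2 ≤ j → j ≤ n - 2 →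
      ∃ s : Finset (Fin n), s.card = j ∧ ∏ i ∈ s, d i = 1 := by
  classical
  intro j hj2 hjn
  choose m hmo hme using hroots
  have hd0 : ∀ i, d i ≠ 0 := by
    intro i h
    have hmi := hme i
    rw [h, zero_pow (by rcases hmo i with ⟨k, hk⟩; omega)] at hmi
    exact zero_ne_one hmi
  obtain ⟨σ, hσ⟩ := hreal
  have hPne : (∏ i, d i) ≠ 0 := Finset.prod_ne_zero_iff.mpr (fun i _ => hd0 i)
  have hPinv : (∏ i, d i)⁻¹ = ∏ i, d i := by
    rw [← Finset.prod_inv_distrib]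
    calc ∏ i, (d i)⁻¹ = ∏ i, d (σ i) := by simp only [hσ]
      _ = ∏ i, d i := Equiv.prod_comp σ d
  have hP : ∏ i, d i = 1 := by
    have hP2 : (∏ i, d i) ^ 2 = 1 := by
      have h := mul_inv_cancel₀ hPne
      rw [hPinv] at h
      rw [sq]; exact h
    have hPM : (∏ i, d i) ^ (∏ i, m i) = 1 := by
      rw [← Finset.prod_pow]
      apply Finset.prod_eq_one
      intro i _
      obtain ⟨c, hc⟩ := Finset.dvd_prod_of_mem m (Finset.mem_univ i)
      rw [hc, pow_mul, hme i, one_pow]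
    have hModd : Odd (∏ i, m i) :=
      Finset.prod_induction m Odd (fun _ _ => Odd.mul) odd_one (fun i _ => hmo i)
    exact aux_sq_one hModd hPM hP2
  have hinj : ∀ i, d i ≠ 1 → d i ≠ (d i)⁻¹ := by
    intro i h1 heq
    apply h1
    apply aux_sq_one (hmo i) (hme i)
    rw [sq]
    nth_rewrite 2 [heq]
    exact mul_inv_cancel₀ (hd0 i)
  set B := Finset.univ.filter (fun i => ¬ d i = 1) with hB
  have hHuniv : ∀ x : ℂ,
      ((Finset.univ.val : Multiset (Fin n)).map d).count x
        = (Finset.univ.val.map d).count x⁻¹ := by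
    intro x
    rw [Multiset.count_map, Multiset.count_map]
    have key : (Finset.univ.filter (fun a => x = d a)).card
        = (Finset.univ.filter (fun a => x⁻¹ = d a)).card := by
      apply Finset.card_bij' (fun a _ => σ a) (fun a _ => σ.symm a)
      · intro a ha
        simp only [Finset.mem_filter, Finset.mem_univ, true_and] at ha ⊢
        rw [hσ, ← ha]
      · intro a ha
        simp only [Finset.mem_filter, Finset.mem_univ, true_and] at ha ⊢
        have h := hσ (σ.symm a)
        rw [Equiv.apply_symm_apply] at h
        rw [← inv_inv x, ha, h, inv_inv]
      · intro a _; exact σ.symm_apply_apply a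
      · intro a _; exact σ.apply_symm_apply a
    simpa [Finset.card, Finset.filter_val] using key
  have hHB : ∀ x : ℂ, (B.val.map d).count x = (B.val.map d).count x⁻¹ := by
    have hmapB : B.val.map d = (Finset.univ.val.map d).filter (fun z => ¬ z = 1) := by
      rw [hB, Finset.filter_val, Multiset.filter_map]
      congr 1
    intro x
    by_cases hx : x = 1
    · subst hx; rw [inv_one]
    · have hx' : ¬ (x⁻¹ = 1) := fun h => hx (inv_eq_one.mp h)
      rw [hmapB, Multiset.count_filter, Multiset.count_filter, if_pos hx, if_pos hx']
      exact hHuniv x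
  have hBone : ∀ i ∈ B, d i ≠ 1 := fun i hi => (Finset.mem_filter.mp hi).2
  obtain ⟨τ, hτinv, hτB, hτfix⟩ :=
    pairing_lemma d hinj n B (le_trans (Finset.card_le_univ B) (by simp)) hHB hBone
  have hprodB : ∏ i ∈ B, d i = 1 := by
    have h := Finset.prod_filter_mul_prod_filter_not Finset.univ (fun i => d i = 1) d
    have hA1 : ∏ i ∈ Finset.univ.filter (fun i => d i = 1), d i = 1 :=
      Finset.prod_eq_one (fun i hi => (Finset.mem_filter.mp hi).2)
    rw [hA1, one_mul, hP] at h
    exact h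
  have hcardAB : (Finset.univ.filter (fun i => d i = 1)).card + B.card = n := by
    have h := Finset.card_filter_add_card_filter_not
      (s := (Finset.univ : Finset (Fin n))) (p := fun i => d i = 1)
    simpa using h
  by_cases hjB : j ≤ B.card
  · rcases Nat.even_or_odd j with hev | hod
    · have hjev := Nat.even_iff.mp hev
      obtain ⟨s, _, hcard, hprod⟩ :=
        extract_lemma d hd0 τ hτinv (j / 2) B hτB (by omega)
      exact ⟨s, by omega, hprod⟩
    · have hjodd := Nat.odd_iff.mp hod
      by_cases hA : ∃ i₀, d i₀ = 1
      · obtain ⟨i₀, hi₀⟩ := hA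
        have hi₀B : i₀ ∉ B := by simp [hB, hi₀]
        obtain ⟨s, hsub, hcard, hprod⟩ :=
          extract_lemma d hd0 τ hτinv ((j - 1) / 2) B hτB (by omega)
        have hi₀s : i₀ ∉ s := fun h => hi₀B (hsub h)
        refine ⟨insert i₀ s, ?_, ?_⟩
        · rw [Finset.card_insert_of_notMem hi₀s, hcard]; omega
        · rw [Finset.prod_insert hi₀s, hi₀, hprod, one_mul]
      · push_neg at hA
        obtain ⟨i₁, i₂, i₃, h12, h13, h23, htr⟩ := htriple
        obtain ⟨W, hWmem, hW6⟩ : ∃ W : Finset (Fin n),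
            (∀ l, l ∈ W ↔ (l = i₁ ∨ l = i₂ ∨ l = i₃ ∨ l = τ i₁ ∨ l = τ i₂ ∨ l = τ i₃)) ∧
            W.card ≤ 6 := by
          refine ⟨{i₁, i₂, i₃, τ i₁, τ i₂, τ i₃}, fun l => by
            simp [Finset.mem_insert], ?_⟩
          refine le_trans (Finset.card_insert_le _ _) ?_
          refine le_trans (Nat.add_le_add_right (Finset.card_insert_le _ _) 1) ?_
          refine le_trans (Nat.add_le_add_right (Nat.add_le_add_right (Finset.card_insert_le _ _) 1) 1) ?_
          refine le_trans (Nat.add_le_add_right (Nat.add_le_add_right (Nat.add_le_add_right (Finset.card_insert_le _ _) 1) 1) 1) ?_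
          refine le_trans (Nat.add_le_add_right (Nat.add_le_add_right (Nat.add_le_add_right (Nat.add_le_add_right (Finset.card_insert_le _ _) 1) 1) 1) 1) ?_
          simp
        set C := B \ W with hCdef
        have hCinv : ∀ k ∈ C, τ k ∈ C ∧ τ k ≠ k ∧ d (τ k) = (d k)⁻¹ := by
          intro k hk
          rw [hCdef, Finset.mem_sdiff] at hk
          obtain ⟨hkB, hkW⟩ := hk
          obtain ⟨h1, h2, h3⟩ := hτB k hkB
          refine ⟨Finset.mem_sdiff.mpr ⟨h1, ?_⟩, h2, h3⟩
          intro hmemW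
          apply hkW
          rw [hWmem] at hmemW
          rw [hWmem]
          rcases hmemW with h | h | h | h | h | h
          · right; right; right; left; rw [← h, hτinv]  -- wrong? τ k = i₁ ⇒ k = τ i₁
          · right; right; right; right; left; rw [← h, hτinv]
          · right; right; right; right; right; rw [← h, hτinv]
          · left; have := congrArg τ h; rwa [hτinv, hτinv] at this
          · right; left; have := congrArg τ h; rwa [hτinv, hτinv] at this
          · right; right; left; have := congrArg τ h; rwa [hτinv, hτinv] at this
        have hCcard : B.card - 6 ≤ C.card := by
          rw [hCdef]
          have h := Finset.le_card_sdiff W B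
          omega
        have hBuniv : B = Finset.univ := by
          rw [hB]
          exact Finset.filter_true_of_mem (fun i _ => hA i)
        have hBn : B.card = n := by rw [hBuniv, Finset.card_univ, Fintype.card_fin]
        have hneven := Nat.even_iff.mp hn
        obtain ⟨s, hsub, hcard, hprod⟩ :=
          extract_lemma d hd0 τ hτinv ((j - 3) / 2) C hCinv (by omega)
        have hsW : ∀ l ∈ W, l ∉ s := by
          intro l hl hls
          have := hsub hls
          rw [hCdef, Finset.mem_sdiff] at this
          exact this.2 hl
        have h1s : i₁ ∉ s := hsW i₁ (by rw [hWmem]; tauto)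
        have h2s : i₂ ∉ s := hsW i₂ (by rw [hWmem]; tauto)
        have h3s : i₃ ∉ s := hsW i₃ (by rw [hWmem]; tauto)
        have h2i : i₂ ∉ insert i₃ s := by
          simp only [Finset.mem_insert]
          rintro (h | h)
          · exact h23 h
          · exact h2s h
        have h1i : i₁ ∉ insert i₂ (insert i₃ s) := by
          simp only [Finset.mem_insert]
          rintro (h | h | h)
          · exact h12 h
          · exact h13 h
          · exact h1s h
        refine ⟨insert i₁ (insert i₂ (insert i₃ s)), ?_, ?_⟩
        · rw [Finset.card_insert_of_notMem h1i, Finset.card_insert_of_notMem h2i,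
            Finset.card_insert_of_notMem h3s, hcard]
          omega
        · rw [Finset.prod_insert h1i, Finset.prod_insert h2i, Finset.prod_insert h3s,
            hprod, mul_one, ← mul_assoc, htr]
  · push_neg at hjB
    obtain ⟨t, htsub, htcard⟩ :=
      Finset.exists_subset_card_eq (s := Finset.univ.filter (fun i => d i = 1))
        (n := j - B.card) (by omega)
    have hdisj : Disjoint B t := by
      rw [Finset.disjoint_right]
      intro k hkt hkB
      exact (Finset.mem_filter.mp hkB).2 ((Finset.mem_filter.mp (htsub hkt)).2)
    refine ⟨B ∪ t, ?_, ?_⟩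
    · rw [Finset.card_union_of_disjoint hdisj, htcard]
      omega
    · rw [Finset.prod_union hdisj, hprodB, one_mul]
      exact Finset.prod_eq_one (fun i hi => (Finset.mem_filter.mp (htsub hi)).2)
end

section
/- Let d ≥ 1 be a natural number such that 2d ≥ φ(2^d + 1), where φ is Euler's totient. Then d ∈ {1, 2, 3}. -/
lemma sq_totient_ge_of_odd : ∀ n : ℕ, Odd n → n ≤ Nat.totient n ^ 2 := by
  refine Nat.recOnPrimeCoprime ?_ ?_ ?_
  · intro h; exact absurd h (by decide)
  · intro p n hp hodd
    rcases Nat.eq_zero_or_pos n with rfl | hn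
    · simp
    have hpodd : p ≠ 2 := by
      rintro rfl
      obtain ⟨k, hk⟩ := hodd
      obtain ⟨m, hm⟩ := dvd_pow_self 2 hn.ne'
      omega
    have hp3 : 3 ≤ p := by have := hp.two_le; omega
    rw [Nat.totient_prime_pow hp hn]
    have h1 : p ≤ (p - 1) ^ 2 := by
      obtain ⟨q, rfl⟩ : ∃ q, p = q + 3 := ⟨p - 3, by omega⟩
      have h2 : q + 3 - 1 = q + 2 := by omega
      rw [h2]; nlinarith
    calc p ^ n = p ^ (n - 1) * p := by
            rw [← pow_succ]; congr 1; omega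
      _ ≤ (p ^ (n - 1)) ^ 2 * (p - 1) ^ 2 :=
            Nat.mul_le_mul (Nat.le_self_pow two_ne_zero _) h1
      _ = (p ^ (n - 1) * (p - 1)) ^ 2 := by ring
  · intro a b ha hb hab iha ihb hodd
    obtain ⟨hoa, hob⟩ := Nat.odd_mul.mp hodd
    rw [Nat.totient_mul hab]
    calc a * b ≤ Nat.totient a ^ 2 * Nat.totient b ^ 2 :=
          Nat.mul_le_mul (iha hoa) (ihb hob)
      _ = (Nat.totient a * Nat.totient b) ^ 2 := by ring

lemma four_sq_lt_two_pow : ∀ d : ℕ, 9 ≤ d → 4 * d ^ 2 < 2 ^ d := by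
  intro d hd
  induction d with
  | zero => omega
  | succ n ih =>
    rcases Nat.lt_or_ge n 9 with h | h
    · have hn : n = 8 := by omega
      subst hn; norm_num
    · have h1 := ih (by omega)
      have h2 : 4 * (n + 1) ^ 2 ≤ 2 * (4 * n ^ 2) := by nlinarith
      calc 4 * (n + 1) ^ 2 ≤ 2 * (4 * n ^ 2) := h2
        _ < 2 * 2 ^ n := by omega
        _ = 2 ^ (n + 1) := by ring

set_option maxRecDepth 4000 in
theorem totient_two_pow_add_one (d : ℕ) (hd : 1 ≤ d)
    (h : Nat.totient (2 ^ d + 1) ≤ 2 * d) :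
    d = 1 ∨ d = 2 ∨ d = 3 := by
  by_contra hc
  push_neg at hc
  rcases Nat.lt_or_ge d 9 with hlt | hge
  · interval_cases d <;> revert h hc <;> decide
  · have hodd : Odd (2 ^ d + 1) := by
      refine Even.add_one (Nat.even_pow.mpr ⟨even_two, by omega⟩)
    have h1 := sq_totient_ge_of_odd _ hodd
    have h2 := four_sq_lt_two_pow d hge
    have h3 : Nat.totient (2 ^ d + 1) ^ 2 ≤ (2 * d) ^ 2 :=
      Nat.pow_le_pow_left h 2
    nlinarith
end

section
/- Let D = {d₁, …, dₙ} ⊂ ℂ be a set (with multiplicity) of roots of unity of odd order m = 9 with D = Φ(9) (so n = 6). Then there do not exist pairwise distinct indices i₁, i₂, i₃ with d_{i₁} d_{i₂} d_{i₃} = 1; i.e., no product of three distinct primitive 9-th roots of unity equals 1. -/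
open scoped Pointwise

private lemma aux_arith : ∀ i j k : Fin 9,
    Nat.gcd i.val 9 = 1 → Nat.gcd j.val 9 = 1 → Nat.gcd k.val 9 = 1 →
    i ≠ j → i ≠ k → j ≠ k → ¬ 9 ∣ i.val + j.val + k.val := by decide

theorem no_three_distinct_primitive_ninth_roots_prod_one :
    ∀ a ∈ Phi 9, ∀ b ∈ Phi 9, ∀ c ∈ Phi 9,
      a ≠ b → a ≠ c → b ≠ c → a * b * c ≠ 1 := by
  intro a ha b hb c hc hab hac hbc h1
  have hζ : IsPrimitiveRoot (Complex.exp (2 * Real.pi * Complex.I / 9)) 9 :=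
    Complex.isPrimitiveRoot_exp 9 (by norm_num)
  obtain ⟨i, hi, hicop, rfl⟩ := (hζ.isPrimitiveRoot_iff).mp ha
  obtain ⟨j, hj, hjcop, rfl⟩ := (hζ.isPrimitiveRoot_iff).mp hb
  obtain ⟨k, hk, hkcop, rfl⟩ := (hζ.isPrimitiveRoot_iff).mp hc
  rw [← pow_add, ← pow_add, hζ.pow_eq_one_iff_dvd] at h1
  exact aux_arith ⟨i, hi⟩ ⟨j, hj⟩ ⟨k, hk⟩ hicop hjcop hkcop
    (fun h => hab (by rw [show i = j from congrArg Fin.val h]))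
    (fun h => hac (by rw [show i = k from congrArg Fin.val h]))
    (fun h => hbc (by rw [show j = k from congrArg Fin.val h])) h1
end

section
/- Let D be the multiset Φ(5) ∪ Φ(9) of the four primitive 5-th roots of unity together with the six primitive 9-th roots of unity (10 elements total). Then no product of five pairwise distinct elements of D equals 1. -/
open scoped Pointwise

lemma exists_expset (m : ℕ) (hm : m ≠ 0) (ζ : ℂ) (hζ : IsPrimitiveRoot ζ m)
    (t : Finset ℂ) (ht : ↑t ⊆ Phi m) :
    ∃ E : Finset ℕ, E ⊆ Finset.range m ∧ (∀ i ∈ E, Nat.Coprime i m) ∧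
      E.card = t.card ∧ ζ ^ (∑ i ∈ E, i) = ∏ x ∈ t, x := by
  classical
  haveI : NeZero m := ⟨hm⟩
  have hmem : ∀ z ∈ t, ∃ i, i < m ∧ ζ ^ i = z := by
    intro z hz
    have hz' : IsPrimitiveRoot z m := ht hz
    obtain ⟨i, hi, hieq⟩ := hζ.eq_pow_of_pow_eq_one hz'.pow_eq_one
    exact ⟨i, hi, hieq⟩
  set g : ℂ → ℕ := fun z => if h : ∃ i, i < m ∧ ζ ^ i = z then h.choose else 0 with hg
  have hgspec : ∀ z ∈ t, g z < m ∧ ζ ^ (g z) = z := by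
    intro z hz
    have h := hmem z hz
    simp only [hg, dif_pos h]
    exact h.choose_spec
  have hinj : Set.InjOn g ↑t := by
    intro x hx y hy hxy
    rw [← (hgspec x hx).2, ← (hgspec y hy).2, hxy]
  refine ⟨t.image g, ?_, ?_, ?_, ?_⟩
  · intro i hi
    obtain ⟨z, hz, rfl⟩ := Finset.mem_image.mp hi
    exact Finset.mem_range.mpr (hgspec z hz).1
  · intro i hi
    obtain ⟨z, hz, rfl⟩ := Finset.mem_image.mp hi
    have : IsPrimitiveRoot (ζ ^ g z) m := by rw [(hgspec z hz).2]; exact ht hz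
    exact (hζ.pow_iff_coprime (Nat.pos_of_ne_zero hm) (g z)).mp this
  · exact Finset.card_image_of_injOn hinj
  · rw [← Finset.prod_pow_eq_pow_sum, Finset.prod_image (fun x hx y hy => hinj hx hy)]
    exact Finset.prod_congr rfl fun z hz => (hgspec z hz).2

set_option maxRecDepth 10000 in
lemma combo : ∀ E5 ∈ (Finset.range 5).powerset, ∀ E9 ∈ (Finset.range 9).powerset,
    (∀ i ∈ E5, Nat.Coprime i 5) → (∀ i ∈ E9, Nat.Coprime i 9) →
    E5.card + E9.card = 5 →
    ¬(5 ∣ ∑ i ∈ E5, i ∧ 9 ∣ ∑ i ∈ E9, i) := by decide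

theorem no_five_distinct_prod_one_Phi5_union_Phi9 :
    ∀ s : Finset ℂ, ↑s ⊆ Phi 5 ∪ Phi 9 → s.card = 5 → ∏ x ∈ s, x ≠ 1 := by
  classical
  intro s hs hcard hprod
  set a := s.filter (fun z => z ∈ Phi 5) with ha
  set b := s.filter (fun z => z ∉ Phi 5) with hb
  have hasub : ↑a ⊆ Phi 5 := by
    intro z hz
    exact (Finset.mem_filter.mp hz).2
  have hbsub : ↑b ⊆ Phi 9 := by
    intro z hz
    obtain ⟨hzs, hz5⟩ := Finset.mem_filter.mp hz
    rcases hs hzs with h | h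
    · exact absurd h hz5
    · exact h
  have hab : (∏ x ∈ a, x) * (∏ x ∈ b, x) = 1 := by
    rw [ha, hb, Finset.prod_filter_mul_prod_filter_not]
    exact hprod
  have hpa5 : (∏ x ∈ a, x) ^ 5 = 1 := by
    rw [← Finset.prod_pow]
    exact Finset.prod_eq_one fun x hx => (hasub hx).pow_eq_one
  have hpb9 : (∏ x ∈ b, x) ^ 9 = 1 := by
    rw [← Finset.prod_pow]
    exact Finset.prod_eq_one fun x hx => (hbsub hx).pow_eq_one
  have hpa9 : (∏ x ∈ a, x) ^ 9 = 1 := by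
    have : ((∏ x ∈ a, x) * (∏ x ∈ b, x)) ^ 9 = 1 := by rw [hab]; norm_num
    rw [mul_pow, hpb9, mul_one] at this
    exact this
  have hpa1 : (∏ x ∈ a, x) = 1 := by
    have h10 : (∏ x ∈ a, x) ^ 10 = 1 := by
      rw [show (10 : ℕ) = 5 * 2 from rfl, pow_mul, hpa5, one_pow]
    rw [show (10 : ℕ) = 9 + 1 from rfl, pow_add, hpa9, one_mul, pow_one] at h10
    exact h10
  have hpb1 : (∏ x ∈ b, x) = 1 := by
    rw [hpa1, one_mul] at hab
    exact hab
  obtain ⟨E5, hE5r, hE5c, hE5card, hE5prod⟩ :=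
    exists_expset 5 (by norm_num) _ (Complex.isPrimitiveRoot_exp 5 (by norm_num)) a hasub
  obtain ⟨E9, hE9r, hE9c, hE9card, hE9prod⟩ :=
    exists_expset 9 (by norm_num) _ (Complex.isPrimitiveRoot_exp 9 (by norm_num)) b hbsub
  have hd5 : 5 ∣ ∑ i ∈ E5, i := by
    rw [← (Complex.isPrimitiveRoot_exp 5 (by norm_num)).pow_eq_one_iff_dvd, hE5prod]
    exact hpa1
  have hd9 : 9 ∣ ∑ i ∈ E9, i := by
    rw [← (Complex.isPrimitiveRoot_exp 9 (by norm_num)).pow_eq_one_iff_dvd, hE9prod]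
    exact hpb1
  have hsum : E5.card + E9.card = 5 := by
    rw [hE5card, hE9card, ha, hb, Finset.card_filter_add_card_filter_not, hcard]
  exact combo E5 (Finset.mem_powerset.mpr hE5r) E9 (Finset.mem_powerset.mpr hE9r)
    hE5c hE9c hsum ⟨hd5, hd9⟩
end
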